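/- Let 0 < α < 1/2 (with κα = 1, so 2κα² = 2α) and h as above. Then for every a ∈ [2α, 1] and every t ≠ 0: |(d/dt)(|h(t)|^a)|² ≤ (1/(2α))·1, i.e. the derivative of |h|^a at t has square at most 1/(2α) times 1 (more precisely, if v is differentiable then |∇(|h(v)|^a)|² ≤ (1/(2α))|∇v|²). -/

import Mathlib

open Real Filter MeasureTheory Set
open Topology Asymptotics

/-- The change-of-variable function `g` (inverse of `h`), with `2κα² = 2α`. -/
noncomputable def gfun (α : ℝ) (u : ℝ) : ℝ :=
  ∫ s in (0:ℝ)..u, Real.sqrt (1 + 2*α * |s| ^ (2*(2*α-1)))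

section aux

noncomputable def fa (α : ℝ) (s : ℝ) : ℝ := Real.sqrt (1 + 2*α * |s| ^ (2*(2*α-1)))

lemma sqrt_add_le' {x y : ℝ} (hx : 0 ≤ x) (hy : 0 ≤ y) :
    Real.sqrt (x + y) ≤ Real.sqrt x + Real.sqrt y := by
  rw [← Real.sqrt_sq (by positivity : (0:ℝ) ≤ Real.sqrt x + Real.sqrt y)]
  apply Real.sqrt_le_sqrt
  nlinarith [Real.sq_sqrt hx, Real.sq_sqrt hy, Real.sqrt_nonneg x, Real.sqrt_nonneg y]

lemma fa_meas (α : ℝ) : Measurable (fa α) := by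
  unfold fa
  fun_prop

lemma fa_bound (α : ℝ) (hα : 0 ≤ α) (s : ℝ) :
    fa α s ≤ 1 + Real.sqrt (2*α) * |s| ^ (2*α-1) := by
  have h1 : |s| ^ (2*(2*α-1)) = (|s| ^ (2*α-1))^2 := by
    rw [← Real.rpow_natCast (|s| ^ (2*α-1)) 2, ← Real.rpow_mul (abs_nonneg s)]
    norm_num; ring_nf
  have h2 : 0 ≤ 2*α * |s| ^ (2*(2*α-1)) := by positivity
  calc fa α s ≤ Real.sqrt 1 + Real.sqrt (2*α * |s| ^ (2*(2*α-1))) :=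
        sqrt_add_le' zero_le_one h2
    _ = 1 + Real.sqrt (2*α) * |s| ^ (2*α-1) := by
        rw [Real.sqrt_one, Real.sqrt_mul (by linarith) _, h1,
          Real.sqrt_sq (Real.rpow_nonneg (abs_nonneg s) _)]

lemma absrpow_int {r : ℝ} (hr : -1 < r) (c d : ℝ) :
    IntervalIntegrable (fun x : ℝ => |x| ^ r) volume c d := by
  suffices H : ∀ e : ℝ, IntervalIntegrable (fun x : ℝ => |x| ^ r) volume 0 e by
    exact (H c).symm.trans (H d)
  have Hpos : ∀ e : ℝ, 0 ≤ e → IntervalIntegrable (fun x : ℝ => |x| ^ r) volume 0 e := by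
    intro e he
    have := intervalIntegral.intervalIntegrable_rpow' (a := 0) (b := e) hr
    rw [intervalIntegrable_iff, uIoc_of_le he] at this ⊢
    apply this.congr_fun ?_ measurableSet_Ioc
    intro x hx
    show x ^ r = |x| ^ r
    rw [abs_of_pos hx.1]
  intro e
  rcases le_total 0 e with he | he
  · exact Hpos e he
  · have := (Hpos (-e) (by linarith))
    rw [IntervalIntegrable.iff_comp_neg] at this
    simpa using this

lemma fa_int (α : ℝ) (hα0 : 0 < α) (hα1 : α < 1/2) (c d : ℝ) :
    IntervalIntegrable (fa α) volume c d := by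
  have hg : IntervalIntegrable (fun x : ℝ => 1 + Real.sqrt (2*α) * |x| ^ (2*α-1)) volume c d := by
    have := (absrpow_int (r := 2*α-1) (by linarith) c d).const_mul (Real.sqrt (2*α))
    simpa using (_root_.intervalIntegrable_const (c := (1:ℝ))).add this
  apply IntervalIntegrable.mono_fun hg ((fa_meas α).aestronglyMeasurable.restrict)
  filter_upwards with x
  have h1 : 0 ≤ fa α x := Real.sqrt_nonneg _
  have h2 : (0:ℝ) ≤ 1 + Real.sqrt (2*α) * |x| ^ (2*α-1) := by positivity
  simp only [Real.norm_eq_abs, abs_of_nonneg h1, abs_of_nonneg h2]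
  exact fa_bound α hα0.le x

end aux

section aux2

lemma gfun_eq (α : ℝ) (u : ℝ) : gfun α u = ∫ s in (0:ℝ)..u, fa α s := rfl

lemma g_hasDeriv (α : ℝ) (hα0 : 0 < α) (hα1 : α < 1/2) {u : ℝ} (hu : u ≠ 0) :
    HasDerivAt (gfun α) (fa α u) u := by
  have h1 : ContinuousAt (fun s : ℝ => |s| ^ (2*(2*α-1))) u :=
    (Real.continuousAt_rpow_const _ _ (Or.inl (abs_ne_zero.mpr hu))).comp
      continuous_abs.continuousAt
  have cont : ContinuousAt (fa α) u :=
    Real.continuous_sqrt.continuousAt.comp (continuousAt_const.add (h1.const_mul (2*α)))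
  exact intervalIntegral.integral_hasDerivAt_right (fa_int α hα0 hα1 0 u)
    ⟨univ, univ_mem, (fa_meas α).aestronglyMeasurable.restrict⟩ cont

lemma g_cont (α : ℝ) (hα0 : 0 < α) (hα1 : α < 1/2) : Continuous (gfun α) :=
  intervalIntegral.continuous_primitive (fun c d => fa_int α hα0 hα1 c d) 0

lemma g_zero (α : ℝ) : gfun α 0 = 0 := intervalIntegral.integral_same

lemma g_mono (α : ℝ) (hα0 : 0 < α) (hα1 : α < 1/2) : Monotone (gfun α) := by
  intro u v huv
  have hadd := intervalIntegral.integral_add_adjacent_intervals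
    (fa_int α hα0 hα1 0 u) (fa_int α hα0 hα1 u v)
  have hnn : 0 ≤ ∫ s in u..v, fa α s :=
    intervalIntegral.integral_nonneg huv (fun x _ => Real.sqrt_nonneg _)
  rw [gfun_eq, gfun_eq]
  linarith [hadd]

lemma g_odd (α : ℝ) (u : ℝ) : gfun α (-u) = - gfun α u := by
  have := intervalIntegral.integral_comp_neg (a := u) (b := 0) (fun s => fa α s)
  have heven : ∀ x : ℝ, fa α (-x) = fa α x := by intro x; simp [fa, abs_neg]
  simp only [heven, neg_zero] at this
  rw [gfun_eq, ← this, intervalIntegral.integral_symm, gfun_eq]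

lemma key_ineq (α a : ℝ) (hα0 : 0 < α) (hα1 : α < 1/2) (ha2 : 2*α ≤ a) (ha1 : a ≤ 1)
    {x : ℝ} (hx : 0 < x) :
    a * x ^ (a-1) ≤ (Real.sqrt (2*α))⁻¹ * fa α x := by
  have ha0 : 0 < a := lt_of_lt_of_le (by linarith) ha2
  have hA : 0 ≤ a * x ^ (a-1) := by positivity
  have hB : 0 ≤ (Real.sqrt (2*α))⁻¹ * fa α x := by
    have := Real.sqrt_nonneg (1 + 2*α * |x| ^ (2*(2*α-1)))
    positivity
  have hxabs : |x| = x := abs_of_pos hx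
  have e1 : (x ^ (a-1))^2 = x ^ (2*a-2) := by
    rw [← Real.rpow_natCast (x^(a-1)) 2, ← Real.rpow_mul hx.le]
    congr 1; push_cast; ring
  have hsq : (a * x ^ (a-1))^2 ≤ ((Real.sqrt (2*α))⁻¹ * fa α x)^2 := by
    have hfa : (fa α x)^2 = 1 + 2*α * x ^ (2*(2*α-1)) := by
      rw [fa, hxabs, Real.sq_sqrt (by positivity)]
    have hC : ((Real.sqrt (2*α))⁻¹)^2 = (2*α)⁻¹ := by
      rw [inv_pow, Real.sq_sqrt (by linarith)]
    rw [mul_pow, mul_pow, hC, hfa, e1]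
    have h2a : (0:ℝ) < 2*α := by linarith
    rcases le_total x 1 with hx1 | hx1
    · have hcmp : x ^ (2*a-2) ≤ x ^ (2*(2*α-1)) :=
        Real.rpow_le_rpow_of_exponent_ge hx hx1 (by linarith)
      have ha2' : a^2 ≤ 1 := by nlinarith
      have hxp : 0 ≤ x ^ (2*a-2) := Real.rpow_nonneg hx.le _
      have hinv : 0 < (2*α)⁻¹ := by positivity
      have : (2*α)⁻¹ * (1 + 2*α * x ^ (2*(2*α-1)))
          = (2*α)⁻¹ + x ^ (2*(2*α-1)) := by field_simp
      rw [this]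
      nlinarith
    · have hcmp : x ^ (2*a-2) ≤ 1 :=
        Real.rpow_le_one_of_one_le_of_nonpos hx1 (by linarith)
      have hone : (1:ℝ) ≤ (2*α)⁻¹ := by
        rw [le_inv_comm₀] <;> nlinarith
      have hxp : 0 ≤ x ^ (2*(2*α-1)) := Real.rpow_nonneg hx.le _
      have ha2' : a^2 ≤ 1 := by nlinarith
      have hxp2 : 0 ≤ x ^ (2*a-2) := Real.rpow_nonneg hx.le _
      have hinv : 0 < (2*α)⁻¹ := by positivity
      nlinarith
  calc a * x ^ (a-1) = Real.sqrt ((a * x ^ (a-1))^2) := (Real.sqrt_sq hA).symm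
    _ ≤ Real.sqrt (((Real.sqrt (2*α))⁻¹ * fa α x)^2) := Real.sqrt_le_sqrt hsq
    _ = (Real.sqrt (2*α))⁻¹ * fa α x := Real.sqrt_sq hB

lemma core_ineq (α a : ℝ) (hα0 : 0 < α) (hα1 : α < 1/2) (ha2 : 2*α ≤ a) (ha1 : a ≤ 1) :
    ∀ w u : ℝ, 0 ≤ w → w ≤ u →
      u ^ a - w ^ a ≤ (Real.sqrt (2*α))⁻¹ * (gfun α u - gfun α w) := by
  have ha0 : 0 < a := lt_of_lt_of_le (by linarith) ha2
  set C := (Real.sqrt (2*α))⁻¹ with hCdef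
  set F := fun u : ℝ => C * gfun α u - u ^ a with hF
  have hderiv : ∀ u : ℝ, 0 < u → HasDerivAt F (C * fa α u - a * u ^ (a-1)) u := by
    intro u hu
    exact ((g_hasDeriv α hα0 hα1 hu.ne').const_mul C).sub
      (Real.hasDerivAt_rpow_const (Or.inl hu.ne'))
  have hmonoF : MonotoneOn F (Ici (0:ℝ)) := by
    apply monotoneOn_of_deriv_nonneg (convex_Ici 0)
    · have hcg : ContinuousOn (fun u : ℝ => C * gfun α u) (Ici 0) :=
        (continuous_const.mul (g_cont α hα0 hα1)).continuousOn
      have hcr : ContinuousOn (fun u : ℝ => u ^ a) (Ici 0) := fun u _ =>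
        (Real.continuousAt_rpow_const u a (Or.inr ha0.le)).continuousWithinAt
      exact hcg.sub hcr
    · rw [interior_Ici]
      intro u hu
      exact ((hderiv u hu).differentiableAt).differentiableWithinAt
    · rw [interior_Ici]
      intro u hu
      rw [(hderiv u hu).deriv]
      have := key_ineq α a hα0 hα1 ha2 ha1 hu
      linarith
  intro w u hw hwu
  have := hmonoF (mem_Ici.mpr hw) (mem_Ici.mpr (hw.trans hwu)) hwu
  simp only [hF] at this
  have hexp : C * (gfun α u - gfun α w) = C * gfun α u - C * gfun α w := by ring
  rw [hexp]
  linarith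

end aux2

lemma phi_lip (α : ℝ) (hα0 : 0 < α) (hα1 : α < 1/2) (h : ℝ → ℝ)
    (hinv1 : Function.LeftInverse h (gfun α)) (hinv2 : Function.RightInverse h (gfun α))
    (a : ℝ) (ha2 : 2*α ≤ a) (ha1 : a ≤ 1) :
    ∀ s t : ℝ, |(|h t| ^ a) - |h s| ^ a| ≤ (Real.sqrt (2*α))⁻¹ * |t - s| := by
  have ha0 : 0 < a := lt_of_lt_of_le (by linarith) ha2
  set C := (Real.sqrt (2*α))⁻¹ with hCdef
  have hC0 : 0 ≤ C := by positivity
  have ghid : ∀ t, gfun α (h t) = t := hinv2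
  have gstrict : StrictMono (gfun α) :=
    (g_mono α hα0 hα1).strictMono_of_injective hinv1.injective
  have hmono : Monotone h := fun s t hst => by
    rw [← gstrict.le_iff_le, ghid, ghid]; exact hst
  have core := core_ineq α a hα0 hα1 ha2 ha1
  have main : ∀ s t : ℝ, s ≤ t → |(|h t| ^ a) - |h s| ^ a| ≤ C * (t - s) := by
    intro s t hst
    have hht := hmono hst
    rcases le_or_gt 0 (h s) with hs0 | hs0
    · have h1 : 0 ≤ h t := le_trans hs0 hht
      rw [abs_of_nonneg h1, abs_of_nonneg hs0]
      have hle : (h s) ^ a ≤ (h t) ^ a := Real.rpow_le_rpow hs0 hht ha0.le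
      rw [abs_of_nonneg (by linarith)]
      have hcore := core (h s) (h t) hs0 hht
      rwa [ghid, ghid] at hcore
    rcases le_or_gt (h t) 0 with ht0 | ht0
    · rw [abs_of_nonpos ht0, abs_of_nonpos hs0.le]
      have h2 : -h t ≤ -h s := by linarith
      have hle : (-h t) ^ a ≤ (-h s) ^ a := Real.rpow_le_rpow (by linarith) h2 ha0.le
      rw [abs_sub_comm, abs_of_nonneg (by linarith)]
      have hcore := core (-h t) (-h s) (by linarith) h2
      rw [g_odd, g_odd, ghid, ghid] at hcore
      have : -s - -t = t - s := by ring
      rwa [this] at hcore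
    · have hs' : s < 0 := by
        have := gstrict hs0
        rwa [ghid, g_zero] at this
      have ht' : 0 < t := by
        have := gstrict ht0
        rwa [ghid, g_zero] at this
      have c1 := core 0 (h t) le_rfl ht0.le
      rw [ghid, g_zero] at c1
      have c2 := core 0 (-h s) le_rfl (by linarith)
      rw [g_odd, ghid, g_zero] at c2
      rw [Real.zero_rpow (ne_of_gt ha0)] at c1 c2
      rw [abs_of_pos ht0, abs_of_neg hs0]
      have p1 : 0 ≤ (h t) ^ a := Real.rpow_nonneg ht0.le a
      have p2 : 0 ≤ (-h s) ^ a := Real.rpow_nonneg (by linarith) a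
      have hCt : 0 ≤ C * t := mul_nonneg hC0 ht'.le
      have hCs : C * s ≤ 0 := mul_nonpos_of_nonneg_of_nonpos hC0 hs'.le
      rw [abs_sub_le_iff]
      constructor <;> nlinarith
  intro s t
  rcases le_total s t with hst | hst
  · rw [abs_of_nonneg (by linarith : (0:ℝ) ≤ t - s)]
    exact main s t hst
  · rw [abs_of_nonpos (by linarith : t - s ≤ 0), abs_sub_comm]
    have := main t s hst
    have he : -(t - s) = s - t := by ring
    rwa [he]

theorem stmt11 (α : ℝ) (hα0 : 0 < α) (hα1 : α < 1/2) (h : ℝ → ℝ)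
    (hinv1 : Function.LeftInverse h (gfun α)) (hinv2 : Function.RightInverse h (gfun α)) :
    ∀ a : ℝ, 2*α ≤ a → a ≤ 1 →
      (∀ t : ℝ, t ≠ 0 → (deriv (fun t : ℝ => |h t| ^ a) t)^2 ≤ (1/(2*α)) * 1) ∧
      (∀ (n : ℕ) (v : EuclideanSpace ℝ (Fin n) → ℝ) (x : EuclideanSpace ℝ (Fin n)),
        DifferentiableAt ℝ v x →
        ‖fderiv ℝ (fun y => |h (v y)| ^ a) x‖^2 ≤ (1/(2*α)) * ‖fderiv ℝ v x‖^2) := by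
  intro a ha2 ha1
  set C := (Real.sqrt (2*α))⁻¹ with hCdef
  have hC0 : 0 ≤ C := by positivity
  have hC2 : C^2 = 1/(2*α) := by
    rw [hCdef, inv_pow, Real.sq_sqrt (by linarith), one_div]
  have lip := phi_lip α hα0 hα1 h hinv1 hinv2 a ha2 ha1
  constructor
  · intro t _
    have hfd : ‖fderiv ℝ (fun t : ℝ => |h t| ^ a) t‖ ≤ C := by
      apply norm_fderiv_le_of_lip' ℝ hC0
      filter_upwards with y
      simp only [Real.norm_eq_abs, hCdef]
      exact lip t y
    have hb : |deriv (fun t : ℝ => |h t| ^ a) t| ≤ C := by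
      calc |deriv (fun t : ℝ => |h t| ^ a) t|
          = ‖(fderiv ℝ (fun t : ℝ => |h t| ^ a) t) 1‖ := by
            rw [fderiv_apply_one_eq_deriv]; rw [Real.norm_eq_abs]
        _ ≤ ‖fderiv ℝ (fun t : ℝ => |h t| ^ a) t‖ * ‖(1:ℝ)‖ :=
            (fderiv ℝ (fun t : ℝ => |h t| ^ a) t).le_opNorm 1
        _ ≤ C := by rw [norm_one, mul_one]; exact hfd
    calc (deriv (fun t : ℝ => |h t| ^ a) t)^2
        = |deriv (fun t : ℝ => |h t| ^ a) t|^2 := (sq_abs _).symm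
      _ ≤ C^2 := pow_le_pow_left₀ (abs_nonneg _) hb 2
      _ = (1/(2*α)) * 1 := by rw [hC2, mul_one]
  · intro n v x hv
    set S := fderiv ℝ v x with hS
    have hT : ‖fderiv ℝ (fun y => |h (v y)| ^ a) x‖ ≤ C * ‖S‖ := by
      apply le_of_forall_pos_le_add
      intro ε hε
      set δ := ε / (C + 1) with hδdef
      have hδ0 : 0 < δ := by positivity
      have hev : ∀ᶠ y in 𝓝 x, ‖v y - v x‖ ≤ (‖S‖ + δ) * ‖y - x‖ := by
        filter_upwards [hv.hasFDerivAt.isLittleO.def hδ0] with y hy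
        have h2 := norm_add_le (v y - v x - S (y - x)) (S (y - x))
        simp only [sub_add_cancel] at h2
        have h3 : ‖S (y - x)‖ ≤ ‖S‖ * ‖y - x‖ := S.le_opNorm _
        calc ‖v y - v x‖ ≤ ‖v y - v x - S (y - x)‖ + ‖S (y - x)‖ := h2
          _ ≤ δ * ‖y - x‖ + ‖S‖ * ‖y - x‖ := add_le_add hy h3
          _ = (‖S‖ + δ) * ‖y - x‖ := by ring
      have hbd : ‖fderiv ℝ (fun y => |h (v y)| ^ a) x‖ ≤ C * (‖S‖ + δ) := by
        apply norm_fderiv_le_of_lip' ℝ (by positivity)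
        filter_upwards [hev] with y hy
        calc ‖|h (v y)| ^ a - |h (v x)| ^ a‖ ≤ C * |v y - v x| := by
              simp only [Real.norm_eq_abs, hCdef]
              exact lip (v x) (v y)
          _ = C * ‖v y - v x‖ := by rw [Real.norm_eq_abs]
          _ ≤ C * ((‖S‖ + δ) * ‖y - x‖) := by
              exact mul_le_mul_of_nonneg_left hy hC0
          _ = C * (‖S‖ + δ) * ‖y - x‖ := by ring
      have hCδ : C * δ ≤ ε := by
        have hne : C + 1 ≠ 0 := by linarith
        have h1 : C * δ ≤ (C + 1) * δ := by nlinarith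
        have h2 : (C + 1) * δ = ε := by
          rw [hδdef, mul_div_cancel₀ _ hne]
        linarith
      calc ‖fderiv ℝ (fun y => |h (v y)| ^ a) x‖ ≤ C * (‖S‖ + δ) := hbd
        _ = C * ‖S‖ + C * δ := by ring
        _ ≤ C * ‖S‖ + ε := by linarith
    calc ‖fderiv ℝ (fun y => |h (v y)| ^ a) x‖^2
        ≤ (C * ‖S‖)^2 := pow_le_pow_left₀ (norm_nonneg _) hT 2
      _ = C^2 * ‖S‖^2 := by ring
      _ = (1/(2*α)) * ‖S‖^2 := by rw [hC2]
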